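/- Fix d ≥ 2. There exists a monotone function φ: [0,1] → ℝ with values such that ∑_{p=1}^d 3^{-p} φ(x_p) always lies in the Cantor set, and such that for every function f: [0,1]^d → ℝ there exists g: C → ℝ with f(x_1,...,x_d) = g(∑_{p=1}^d 3^{-p} φ(x_p)) for all (x_1,...,x_d) ∈ [0,1]^d. -/

import Mathlib

open Set Filter Topology MeasureTheory

noncomputable section

/-- The unit cube `[0,1]^d`. -/
def cube (d : ℕ) : Set (Fin d → ℝ) := {x | ∀ p, x p ∈ Set.Icc (0:ℝ) 1}

/-- The Cantor middle-thirds set: reals admitting a ternary expansion with digits in `{0,2}`. -/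
def CantorSet : Set ℝ :=
  {y | ∃ t : ℕ → ℕ, (∀ j, t j = 0 ∨ t j = 2) ∧ y = ∑' j : ℕ, (t j : ℝ) / 3 ^ (j + 1)}

/-- `a` assigns to each `x ∈ [0,1]` a fixed binary expansion (`a x j` is the digit `a_{j+1}^x`). -/
def IsBinaryExp (a : ℝ → ℕ → ℕ) : Prop :=
  ∀ x ∈ Set.Icc (0:ℝ) 1, (∀ j, a x j ≤ 1) ∧ x = ∑' j : ℕ, (a x j : ℝ) / 2 ^ (j + 1)

/-- `φ(x) = ∑_{j≥1} 2 a_j^x 3^{-d(j-1)}`. -/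
def phiFun (d : ℕ) (a : ℝ → ℕ → ℕ) (x : ℝ) : ℝ := ∑' j : ℕ, (2 * a x j : ℝ) / 3 ^ (d * j)

/-- `Φ(x_1,…,x_d) = ∑_{p=1}^d 3^{-p} φ(x_p)`. -/
def PhiFun (d : ℕ) (a : ℝ → ℕ → ℕ) (x : Fin d → ℝ) : ℝ :=
  ∑ p : Fin d, phiFun d a (x p) / 3 ^ ((p : ℕ) + 1)

def bdig (x : ℝ) (j : ℕ) : ℕ :=
  if x = 1 then 1 else (⌊2 ^ (j + 1) * x⌋ - 2 * ⌊2 ^ j * x⌋).toNat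

lemma floor_two_mul_bounds (y : ℝ) : 2 * ⌊y⌋ ≤ ⌊2 * y⌋ ∧ ⌊2 * y⌋ ≤ 2 * ⌊y⌋ + 1 := by
  constructor
  · exact Int.le_floor.2 (by push_cast; nlinarith [Int.floor_le y])
  · have h1 := Int.lt_floor_add_one y
    have h2 : (2:ℝ) * y < ((2 * ⌊y⌋ + 2 : ℤ) : ℝ) := by push_cast; nlinarith
    have h4 := Int.floor_lt.2 h2
    omega

lemma bdig_le_one (x : ℝ) (j : ℕ) : bdig x j ≤ 1 := by
  unfold bdig
  split
  · exact le_refl 1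
  · have h := floor_two_mul_bounds ((2:ℝ) ^ j * x)
    rw [show (2:ℝ) ^ (j+1) * x = 2 * ((2:ℝ)^j * x) by ring]
    omega

lemma bdig_cast (x : ℝ) (hne : x ≠ 1) (J : ℕ) :
    (bdig x J : ℝ) = (⌊2 ^ (J+1) * x⌋ : ℝ) - 2 * (⌊2 ^ J * x⌋ : ℝ) := by
  have h := floor_two_mul_bounds ((2:ℝ) ^ J * x)
  rw [show (2:ℝ) * ((2:ℝ)^J * x) = 2 ^ (J+1) * x by ring] at h
  unfold bdig
  rw [if_neg hne]
  have h0 : (0:ℤ) ≤ ⌊2 ^ (J+1) * x⌋ - 2 * ⌊2 ^ J * x⌋ := by omega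
  have h1 : (((⌊2 ^ (J+1) * x⌋ - 2 * ⌊2 ^ J * x⌋).toNat : ℕ) : ℝ)
      = ((⌊2 ^ (J+1) * x⌋ - 2 * ⌊2 ^ J * x⌋ : ℤ) : ℝ) := by
    exact_mod_cast congrArg (fun n : ℤ => (n : ℝ)) (Int.toNat_of_nonneg h0)
  rw [h1]
  push_cast; ring

lemma bdig_sum (x : ℝ) (hx0 : 0 ≤ x) (hx1 : x < 1) (J : ℕ) :
    ∑ j ∈ Finset.range J, (bdig x j : ℝ) / 2 ^ (j + 1) = (⌊2 ^ J * x⌋ : ℝ) / 2 ^ J := by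
  induction J with
  | zero =>
    have : ⌊x⌋ = 0 := Int.floor_eq_zero_iff.2 ⟨hx0, hx1⟩
    simp [this]
  | succ J ih =>
    rw [Finset.sum_range_succ, ih, bdig_cast x hx1.ne]
    have h2 : (2:ℝ) ^ (J+1) = 2 * 2 ^ J := by ring
    field_simp
    ring

lemma summable_digit_geo {q : ℝ} (h0 : 0 ≤ q) (h1 : q < 1) {u : ℕ → ℕ} (hu : ∀ j, u j ≤ 2) :
    Summable (fun j => (u j : ℝ) * q ^ j) :=
  Summable.of_nonneg_of_le (fun j => by positivity)
    (fun j => mul_le_mul_of_nonneg_right (by exact_mod_cast hu j) (by positivity))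
    ((summable_geometric_of_lt_one h0 h1).mul_left 2)

lemma tsum_lt_tsum_digits {q : ℝ} (h0 : 0 < q) (h1 : 2 * q < 1) {u v : ℕ → ℕ}
    (hu : ∀ j, u j ≤ 2) (hv : ∀ j, v j ≤ 2) {k : ℕ}
    (hpre : ∀ j < k, u j = v j) (hk : u k + 2 ≤ v k) :
    ∑' j, (u j : ℝ) * q ^ j < ∑' j, (v j : ℝ) * q ^ j := by
  have hq1 : q < 1 := by linarith
  have hsu := summable_digit_geo h0.le hq1 hu
  have hsv := summable_digit_geo h0.le hq1 hv
  set w : ℕ → ℝ := fun j => (v j : ℝ) * q ^ j - (u j : ℝ) * q ^ j with hw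
  have hsw : Summable w := hsv.sub hsu
  have hsw' : Summable (fun j => w (j + (k + 1))) := hsw.comp_injective (add_left_injective _)
  have hsplit := Summable.sum_add_tsum_nat_add' (f := w) (k := k + 1) hsw'
  have hS1 : ∑ j ∈ Finset.range (k + 1), w j = w k := by
    rw [Finset.sum_range_succ, Finset.sum_eq_zero, zero_add]
    intro j hj
    simp only [hw, hpre j (Finset.mem_range.1 hj), sub_self]
  have hwk : 2 * q ^ k ≤ w k := by
    have : (u k : ℝ) + 2 ≤ (v k : ℝ) := by exact_mod_cast hk
    have hqk : (0:ℝ) < q ^ k := pow_pos h0 k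
    simp only [hw]; nlinarith
  have hgeo : Summable (fun j : ℕ => 2 * q ^ (k + 1) * q ^ j) :=
    (summable_geometric_of_lt_one h0.le hq1).mul_left _
  have htail : -(2 * q ^ (k + 1) * (1 - q)⁻¹) ≤ ∑' j, w (j + (k + 1)) := by
    have hterm : ∀ j, -(2 * q ^ (k + 1) * q ^ j) ≤ w (j + (k + 1)) := by
      intro j
      have h1 : ((v (j + (k+1)) : ℝ)) ≥ 0 := by positivity
      have h2 : ((u (j + (k+1)) : ℝ)) ≤ 2 := by exact_mod_cast hu _
      have h3 : (0:ℝ) < q ^ (j + (k+1)) := pow_pos h0 _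
      have h4 : q ^ (j + (k + 1)) = q ^ (k+1) * q ^ j := by rw [pow_add]; ring
      simp only [hw]
      nlinarith
    have := Summable.tsum_le_tsum hterm hgeo.neg hsw'
    calc -(2 * q ^ (k + 1) * (1 - q)⁻¹) = ∑' j : ℕ, -(2 * q ^ (k + 1) * q ^ j) := by
          rw [tsum_neg, tsum_mul_left, tsum_geometric_of_lt_one h0.le hq1]
      _ ≤ _ := this
  have hmain : 0 < ∑' j, w j := by
    have hcmp : 2 * q ^ (k + 1) * (1 - q)⁻¹ < 2 * q ^ k := by
      rw [mul_inv_lt_iff₀' (by linarith : (0:ℝ) < 1 - q), pow_succ]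
      nlinarith [pow_pos h0 k]
    rw [← hsplit, hS1]
    linarith
  have hdiff : ∑' j, w j = (∑' j, (v j : ℝ) * q ^ j) - ∑' j, (u j : ℝ) * q ^ j :=
    Summable.tsum_sub hsv hsu
  rw [hdiff] at hmain
  linarith

lemma half_sum (J : ℕ) : ∑ j ∈ Finset.range J, (1:ℝ) / 2 ^ (j + 1) = 1 - (1/2) ^ J := by
  induction J with
  | zero => simp
  | succ J ih =>
    rw [Finset.sum_range_succ, ih]
    have : ((1:ℝ)/2) ^ (J+1) = (1/2)^J / 2 := by rw [pow_succ]; ring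
    rw [this]
    have h2 : ((1:ℝ)/2) ^ J = 1 / 2 ^ J := by rw [div_pow, one_pow]
    rw [h2, pow_succ]
    field_simp
    ring

lemma bdig_one (j : ℕ) : bdig 1 j = 1 := by unfold bdig; simp

lemma first_diff {x y : ℝ} (hx : x ∈ Icc (0:ℝ) 1) (hy : y ∈ Icc (0:ℝ) 1) (hxy : x < y) :
    ∃ k, (∀ j < k, bdig x j = bdig y j) ∧ bdig x k < bdig y k := by
  have hx1 : x < 1 := lt_of_lt_of_le hxy hy.2
  have hdiff : ∃ j, bdig x j ≠ bdig y j := by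
    by_contra hcon
    push_neg at hcon
    rcases eq_or_lt_of_le hy.2 with h1 | h1
    · -- y = 1
      obtain ⟨J, hJ⟩ := exists_pow_lt_of_lt_one (by linarith : (0:ℝ) < 1 - x)
        (by norm_num : (1:ℝ)/2 < 1)
      have hall : ∀ j, bdig x j = 1 := fun j => by rw [hcon j, h1, bdig_one]
      have hsum := bdig_sum x hx.1 hx1 J
      have : ∑ j ∈ Finset.range J, (bdig x j : ℝ) / 2 ^ (j + 1)
          = ∑ j ∈ Finset.range J, (1:ℝ) / 2 ^ (j + 1) := by
        apply Finset.sum_congr rfl; intro j _; rw [hall j]; norm_num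
      rw [this, half_sum] at hsum
      have hP : (0:ℝ) < 2 ^ J := by positivity
      have hfl := Int.floor_le ((2:ℝ) ^ J * x)
      have : 1 - (1/2:ℝ)^J ≤ x := by
        rw [hsum, div_le_iff₀ hP]; nlinarith
      have hpow : ((1:ℝ)/2) ^ J = 1 / 2^J := by rw [div_pow, one_pow]
      nlinarith
    · -- y < 1
      obtain ⟨J, hJ⟩ := exists_pow_lt_of_lt_one (by linarith : (0:ℝ) < y - x)
        (by norm_num : (1:ℝ)/2 < 1)
      have hP : (0:ℝ) < 2 ^ J := by positivity
      have hpow : ((1:ℝ)/2) ^ J = 1 / 2^J := by rw [div_pow, one_pow]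
      have hfloor : ⌊(2:ℝ) ^ J * x⌋ < ⌊(2:ℝ) ^ J * y⌋ := by
        have h2 : (2:ℝ) ^ J * x + 1 < 2 ^ J * y := by
          have : (1:ℝ) < 2 ^ J * (y - x) := by
            rw [hpow] at hJ
            rw [div_lt_iff₀ hP] at hJ
            nlinarith
          nlinarith
        have hle : ((⌊(2:ℝ) ^ J * x⌋ + 1 : ℤ) : ℝ) ≤ 2 ^ J * y := by
          push_cast
          have := Int.floor_le ((2:ℝ) ^ J * x)
          linarith
        have := Int.le_floor.2 hle
        omega
      have hsx := bdig_sum x hx.1 hx1 J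
      have hsy := bdig_sum y hy.1 h1 J
      have heq : ∑ j ∈ Finset.range J, (bdig x j : ℝ) / 2 ^ (j + 1)
          = ∑ j ∈ Finset.range J, (bdig y j : ℝ) / 2 ^ (j + 1) := by
        apply Finset.sum_congr rfl; intro j _; rw [hcon j]
      rw [hsx, hsy, div_eq_div_iff hP.ne' hP.ne'] at heq
      have : (⌊(2:ℝ) ^ J * x⌋ : ℝ) = ⌊(2:ℝ) ^ J * y⌋ := by
        have := mul_right_cancel₀ (ne_of_gt hP) heq
        exact_mod_cast this
      have : ⌊(2:ℝ) ^ J * x⌋ = ⌊(2:ℝ) ^ J * y⌋ := by exact_mod_cast this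
      omega
  classical
  refine ⟨Nat.find hdiff, fun j hj => ?_, ?_⟩
  · have := Nat.find_min hdiff hj
    omega
  · have hne := Nat.find_spec hdiff
    set k := Nat.find hdiff with hkdef
    have hux := bdig_le_one x k
    have huy := bdig_le_one y k
    rcases Nat.lt_or_ge (bdig x k) (bdig y k) with h | h
    · exact h
    · exfalso
      have hxk : bdig x k = 1 := by omega
      have hyk : bdig y k = 0 := by omega
      have hy1 : y < 1 := by
        rcases eq_or_lt_of_le hy.2 with h1 | h1
        · rw [h1] at hyk; rw [bdig_one] at hyk; omega
        · exact h1
      have hsx := bdig_sum x hx.1 hx1 (k+1)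
      have hsy := bdig_sum y hy.1 hy1 (k+1)
      have hpre : ∀ j < k, bdig x j = bdig y j := fun j hj => by
        have := Nat.find_min hdiff hj; omega
      have hS : ∑ j ∈ Finset.range k, (bdig x j : ℝ) / 2 ^ (j + 1)
          = ∑ j ∈ Finset.range k, (bdig y j : ℝ) / 2 ^ (j + 1) := by
        apply Finset.sum_congr rfl; intro j hj; rw [hpre j (Finset.mem_range.1 hj)]
      rw [Finset.sum_range_succ] at hsx hsy
      rw [hxk] at hsx
      rw [hyk] at hsy
      have hP : (0:ℝ) < 2 ^ (k+1) := by positivity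
      have hflx := Int.floor_le ((2:ℝ) ^ (k+1) * x)
      have hfly := Int.lt_floor_add_one ((2:ℝ) ^ (k+1) * y)
      -- x partial sum ≤ x ; y < y partial sum + 1/2^(k+1)
      have h1 : (⌊(2:ℝ) ^ (k+1) * x⌋ : ℝ) / 2 ^ (k+1) ≤ x := by
        rw [div_le_iff₀ hP]; nlinarith
      have h2 : y < (⌊(2:ℝ) ^ (k+1) * y⌋ : ℝ) / 2 ^ (k+1) + 1 / 2 ^ (k+1) := by
        rw [← add_div, lt_div_iff₀ hP]; nlinarith
      rw [← hsx] at h1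
      rw [← hsy] at h2
      rw [hS] at h1
      push_cast at h1 h2
      simp only [zero_div, add_zero] at h2
      linarith

def phi0 (d : ℕ) (x : ℝ) : ℝ := ∑' j : ℕ, (2 * bdig x j : ℝ) / 3 ^ (d * j)

lemma term_eq (d a j : ℕ) :
    (2 * a : ℝ) / 3 ^ (d * j) = ((2 * a : ℕ) : ℝ) * (((1:ℝ)/3) ^ d) ^ j := by
  rw [← pow_mul, div_pow, one_pow]
  push_cast
  ring

lemma q_small {d : ℕ} (hd : 2 ≤ d) : 2 * ((1:ℝ)/3) ^ d < 1 := by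
  have h1 : ((1:ℝ)/3) ^ d ≤ ((1:ℝ)/3) ^ 2 :=
    pow_le_pow_of_le_one (by norm_num) (by norm_num) hd
  nlinarith

lemma phi0_strictMono {d : ℕ} (hd : 2 ≤ d) : StrictMonoOn (phi0 d) (Icc (0:ℝ) 1) := by
  intro x hx y hy hxy
  obtain ⟨k, hpre, hk⟩ := first_diff hx hy hxy
  have h0 : (0:ℝ) < ((1:ℝ)/3) ^ d := by positivity
  have key := tsum_lt_tsum_digits (u := fun j => 2 * bdig x j) (v := fun j => 2 * bdig y j)
    h0 (q_small hd)
    (fun j => by show 2 * bdig x j ≤ 2; have := bdig_le_one x j; omega)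
    (fun j => by show 2 * bdig y j ≤ 2; have := bdig_le_one y j; omega)
    (fun j hj => by show 2 * bdig x j = 2 * bdig y j; rw [hpre j hj])
    (by show 2 * bdig x k + 2 ≤ 2 * bdig y k; omega)
  unfold phi0
  have ex : ∀ z : ℝ, ∑' j : ℕ, (2 * bdig z j : ℝ) / 3 ^ (d * j)
      = ∑' j : ℕ, ((2 * bdig z j : ℕ) : ℝ) * (((1:ℝ)/3) ^ d) ^ j :=
    fun z => tsum_congr fun j => term_eq d (bdig z j) j
  rw [ex x, ex y]
  exact key

lemma summable_div_pow {w : ℕ → ℕ} (hw : ∀ k, w k ≤ 2) :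
    Summable (fun k => (w k : ℝ) / 3 ^ (k + 1)) := by
  apply Summable.of_nonneg_of_le (fun k => by positivity) (fun k => ?_)
    ((summable_geometric_of_lt_one (by norm_num : (0:ℝ) ≤ 1/3) (by norm_num)).mul_left 2)
  have h1 : (w k : ℝ) ≤ 2 := by exact_mod_cast hw k
  have h2 : ((1:ℝ)/3) ^ k = 1 / 3 ^ k := by rw [div_pow, one_pow]
  have h3 : (0:ℝ) < 3 ^ k := by positivity
  have h4 : (0:ℝ) < 3 ^ (k+1) := by positivity
  rw [h2, show (2:ℝ) * (1/3^k) = 2/3^k by ring, div_le_div_iff₀ h4 h3]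
  have h5 : (3:ℝ)^(k+1) = 3^k * 3 := pow_succ 3 k
  nlinarith

lemma ternary_unique {s t : ℕ → ℕ} (hs : ∀ j, s j ≤ 2) (ht : ∀ j, t j ≤ 2)
    (h : ∑' j : ℕ, (s j : ℝ) / 3 ^ (j + 1) = ∑' j : ℕ, (t j : ℝ) / 3 ^ (j + 1))
    (hs2 : ∀ j, s j ≠ 1) (ht2 : ∀ j, t j ≠ 1) : s = t := by
  by_contra hne
  have hex : ∃ j, s j ≠ t j := Function.ne_iff.1 hne
  classical
  obtain ⟨k, hkne, hpre⟩ : ∃ k, s k ≠ t k ∧ ∀ j < k, s j = t j :=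
    ⟨Nat.find hex, Nat.find_spec hex, fun j hj => not_not.1 (Nat.find_min hex hj)⟩
  have conv : ∀ w : ℕ → ℕ, ∑' j : ℕ, (w j : ℝ) / 3 ^ (j + 1)
      = (∑' j : ℕ, (w j : ℝ) * ((1:ℝ)/3) ^ j) / 3 := by
    intro w
    rw [← tsum_div_const]
    apply tsum_congr
    intro j
    have h2 : ((1:ℝ)/3) ^ j = 1 / 3 ^ j := by rw [div_pow, one_pow]
    rw [h2, pow_succ]
    ring
  have h0 : (0:ℝ) < 1/3 := by norm_num
  have h1 : 2 * ((1:ℝ)/3) < 1 := by norm_num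
  rcases Nat.lt_or_ge (s k) (t k) with hlt | hge
  · have key := tsum_lt_tsum_digits h0 h1 hs ht hpre
      (by have := hs2 k; have := ht2 k; have := hs k; have := ht k; omega)
    rw [conv s, conv t] at h
    have heq : ∑' j : ℕ, (s j : ℝ) * ((1:ℝ)/3) ^ j = ∑' j : ℕ, (t j : ℝ) * ((1:ℝ)/3) ^ j := by
      linarith
    linarith
  · have hlt : t k < s k := by omega
    have key := tsum_lt_tsum_digits h0 h1 ht hs (fun j hj => (hpre j hj).symm)
      (by have := hs2 k; have := ht2 k; have := hs k; have := ht k; omega)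
    rw [conv s, conv t] at h
    have heq : ∑' j : ℕ, (s j : ℝ) * ((1:ℝ)/3) ^ j = ∑' j : ℕ, (t j : ℝ) * ((1:ℝ)/3) ^ j := by
      linarith
    linarith

def tdig (d : ℕ) (hd : 0 < d) (x : Fin d → ℝ) (k : ℕ) : ℕ :=
  2 * bdig (x ⟨k % d, Nat.mod_lt k hd⟩) (k / d)

lemma tdig_le (d : ℕ) (hd : 0 < d) (x : Fin d → ℝ) (k : ℕ) : tdig d hd x k ≤ 2 := by
  unfold tdig
  have := bdig_le_one (x ⟨k % d, Nat.mod_lt k hd⟩) (k / d)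
  omega

lemma tdig_ne_one (d : ℕ) (hd : 0 < d) (x : Fin d → ℝ) (k : ℕ) : tdig d hd x k ≠ 1 := by
  unfold tdig; omega

lemma summable_phi_terms {d : ℕ} (hd : 2 ≤ d) (z : ℝ) :
    Summable (fun j : ℕ => (2 * bdig z j : ℝ) / 3 ^ (d * j)) := by
  have h0 : (0:ℝ) ≤ ((1:ℝ)/3) ^ d := by positivity
  have h1 : ((1:ℝ)/3) ^ d < 1 := by
    have := q_small hd; linarith
  have := summable_digit_geo h0 h1 (u := fun j => 2 * bdig z j)
    (fun j => by show 2 * bdig z j ≤ 2; have := bdig_le_one z j; omega)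
  convert this using 1
  funext j
  exact term_eq d (bdig z j) j

set_option maxHeartbeats 1000000 in
lemma rearrange {d : ℕ} (hd2 : 2 ≤ d) (hd : 0 < d) (x : Fin d → ℝ) :
    ∑ p : Fin d, (∑' j : ℕ, (2 * bdig (x p) j : ℝ) / 3 ^ (d * j)) / 3 ^ ((p : ℕ) + 1)
      = ∑' k : ℕ, (tdig d hd x k : ℝ) / 3 ^ (k + 1) := by
  haveI : NeZero d := ⟨hd.ne'⟩
  set F : ℕ → ℝ := fun k => (tdig d hd x k : ℝ) / 3 ^ (k + 1) with hF
  have hSF : Summable F := summable_div_pow (tdig_le d hd x)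
  set e := Nat.divModEquiv d with he
  have hSF' : Summable (fun pr : ℕ × Fin d => F (e.symm pr)) := e.symm.summable_iff.2 hSF
  -- per-pair identity
  have hpair : ∀ (j : ℕ) (p : Fin d),
      F (e.symm (j, p)) = (2 * bdig (x p) j : ℝ) / 3 ^ (d * j) / 3 ^ ((p : ℕ) + 1) := by
    intro j p
    have hesymm : e.symm (j, p) = j * d + (p : ℕ) := rfl
    have hmod : (j * d + (p : ℕ)) % d = (p : ℕ) := by
      rw [mul_comm j d, Nat.mul_add_mod]
      exact Nat.mod_eq_of_lt p.isLt
    have hdiv : (j * d + (p : ℕ)) / d = j := by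
      rw [mul_comm j d, Nat.mul_add_div hd, Nat.div_eq_of_lt p.isLt, Nat.add_zero]
    have hfin : (⟨(j * d + (p : ℕ)) % d, Nat.mod_lt _ hd⟩ : Fin d) = p := Fin.ext hmod
    have hexp : (3:ℝ) ^ (j * d + (p : ℕ) + 1) = 3 ^ (d * j) * 3 ^ ((p : ℕ) + 1) := by
      rw [← pow_add]
      congr 1
      ring
    calc F (e.symm (j, p))
        = (tdig d hd x (j * d + (p : ℕ)) : ℝ) / 3 ^ ((j * d + (p : ℕ)) + 1) :=
          congrArg F hesymm
      _ = (2 * bdig (x p) j : ℝ) / 3 ^ (d * j) / 3 ^ ((p : ℕ) + 1) := by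
          unfold tdig
          rw [hdiv, hfin, hexp, div_div]
          push_cast
          ring
  calc ∑ p : Fin d, (∑' j : ℕ, (2 * bdig (x p) j : ℝ) / 3 ^ (d * j)) / 3 ^ ((p : ℕ) + 1)
      = ∑ p : Fin d, ∑' j : ℕ, (2 * bdig (x p) j : ℝ) / 3 ^ (d * j) / 3 ^ ((p : ℕ) + 1) := by
        apply Finset.sum_congr rfl
        intro p _
        rw [tsum_div_const]
    _ = ∑' j : ℕ, ∑ p : Fin d, (2 * bdig (x p) j : ℝ) / 3 ^ (d * j) / 3 ^ ((p : ℕ) + 1) := by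
        rw [Summable.tsum_finsetSum]
        intro p _
        exact (summable_phi_terms hd2 (x p)).div_const _
    _ = ∑' j : ℕ, ∑ p : Fin d, F (e.symm (j, p)) := by
        apply tsum_congr; intro j
        apply Finset.sum_congr rfl
        intro p _
        rw [hpair j p]
    _ = ∑' j : ℕ, ∑' p : Fin d, F (e.symm (j, p)) := by
        apply tsum_congr; intro j
        exact (tsum_fintype _).symm
    _ = ∑' pr : ℕ × Fin d, F (e.symm pr) := by
        exact (Summable.tsum_prod' hSF' (fun j => Summable.of_finite)).symm
    _ = ∑' k : ℕ, F k := e.symm.tsum_eq F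

lemma tdig_apply {d : ℕ} (hd : 0 < d) (x : Fin d → ℝ) (j : ℕ) (p : Fin d) :
    tdig d hd x (j * d + (p : ℕ)) = 2 * bdig (x p) j := by
  have hmod : (j * d + (p : ℕ)) % d = (p : ℕ) := by
    rw [mul_comm j d, Nat.mul_add_mod]
    exact Nat.mod_eq_of_lt p.isLt
  have hdiv : (j * d + (p : ℕ)) / d = j := by
    rw [mul_comm j d, Nat.mul_add_div hd, Nat.div_eq_of_lt p.isLt, Nat.add_zero]
  have hfin : (⟨(j * d + (p : ℕ)) % d, Nat.mod_lt _ hd⟩ : Fin d) = p := Fin.ext hmod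
  unfold tdig
  rw [hdiv, hfin]

lemma phi_inj {d : ℕ} (hd2 : 2 ≤ d) (hd : 0 < d) {x y : Fin d → ℝ}
    (hx : x ∈ cube d) (hy : y ∈ cube d)
    (h : ∑ p : Fin d, phi0 d (x p) / 3 ^ ((p : ℕ) + 1)
       = ∑ p : Fin d, phi0 d (y p) / 3 ^ ((p : ℕ) + 1)) :
    x = y := by
  have hx' := rearrange hd2 hd x
  have hy' := rearrange hd2 hd y
  have h2 : ∑' k : ℕ, (tdig d hd x k : ℝ) / 3 ^ (k + 1)
      = ∑' k : ℕ, (tdig d hd y k : ℝ) / 3 ^ (k + 1) := by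
    rw [← hx', ← hy']
    exact h
  have hteq := ternary_unique (tdig_le d hd x) (tdig_le d hd y) h2
    (tdig_ne_one d hd x) (tdig_ne_one d hd y)
  funext p
  by_contra hne
  rcases lt_or_gt_of_ne hne with hlt | hlt
  · obtain ⟨k, -, hk⟩ := first_diff (hx p) (hy p) hlt
    have := congrFun hteq (k * d + (p : ℕ))
    rw [tdig_apply hd x k p, tdig_apply hd y k p] at this
    omega
  · obtain ⟨k, -, hk⟩ := first_diff (hy p) (hx p) hlt
    have := congrFun hteq (k * d + (p : ℕ))
    rw [tdig_apply hd x k p, tdig_apply hd y k p] at this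
    omega

/-- Fix `d ≥ 2`. There exists a monotone `φ : [0,1] → ℝ` such that
`∑_{p=1}^d 3^{-p} φ(x_p)` always lies in the Cantor set and such that every
`f : [0,1]^d → ℝ` admits an outer function `g` (on the Cantor set) with
`f(x_1,…,x_d) = g(∑_{p=1}^d 3^{-p} φ(x_p))` on `[0,1]^d`. -/
theorem stmt6 (d : ℕ) (hd : 2 ≤ d) :
    ∃ φ : ℝ → ℝ, MonotoneOn φ (Set.Icc 0 1) ∧
      (∀ x : Fin d → ℝ, x ∈ cube d →
        (∑ p : Fin d, φ (x p) / 3 ^ ((p : ℕ) + 1)) ∈ CantorSet) ∧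
      ∀ f : (Fin d → ℝ) → ℝ, ∃ g : ℝ → ℝ,
        ∀ x ∈ cube d, f x = g (∑ p : Fin d, φ (x p) / 3 ^ ((p : ℕ) + 1)) := by
  have hd0 : 0 < d := by omega
  refine ⟨phi0 d, (phi0_strictMono hd).monotoneOn, ?_, ?_⟩
  · intro x _
    refine ⟨tdig d hd0 x, fun j => ?_, ?_⟩
    · have h1 := tdig_le d hd0 x j
      have h2 := tdig_ne_one d hd0 x j
      omega
    · exact rearrange hd hd0 x
  · intro f
    classical
    refine ⟨fun y => if h : ∃ z, z ∈ cube d ∧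
        (∑ p : Fin d, phi0 d (z p) / 3 ^ ((p : ℕ) + 1)) = y then f h.choose else 0, ?_⟩
    intro x hx
    have hex : ∃ z, z ∈ cube d ∧ (∑ p : Fin d, phi0 d (z p) / 3 ^ ((p : ℕ) + 1))
        = (∑ p : Fin d, phi0 d (x p) / 3 ^ ((p : ℕ) + 1)) := ⟨x, hx, rfl⟩
    simp only [dif_pos hex]
    obtain ⟨hc1, hc2⟩ := hex.choose_spec
    rw [phi_inj hd hd0 hc1 hx hc2]

end
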